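/- arXiv:0801.0526 — 6 statements merged into one kernel-verified Lean document; each statement's English description precedes it below -/
import Mathlib

section
/- For d ≥ 2, the (d²)×(d²) matrices K^d_{a,b,c,e} satisfy the product formula K^d_{a,b,c,e} · K^d_{a',b',c',e'} = K^d_{α,β,γ,δ} where α = aa'+(d−1)(bb'+cc')+(d−1)²ee', β = ab'+a'b+(d−1)(ce'+c'e)+(d−2)bb'+(d−1)(d−2)ee', γ = ac'+a'c+(d−1)(be'+b'e)+(d−2)cc'+(d−1)(d−2)ee', and δ = ae'+a'e+bc'+b'c+(d−2)(ce'+c'e+be'+b'e)+(d−2)²ee'. -/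
lemma sum_ite_mul_ite {R : Type*} [CommRing R] {d : ℕ} (i i' : Fin d) (p q r s : R) :
    ∑ k : Fin d, (if i = k then p else q) * (if k = i' then r else s) =
      if i = i' then p * r + ((d : R) - 1) * (q * s)
      else p * s + q * r + ((d : R) - 2) * (q * s) := by
  by_cases h : i = i'
  · subst h
    have hk : ∀ k : Fin d, (if i = k then p else q) * (if k = i then r else s)
        = q * s + (if i = k then p * r - q * s else 0) := by
      intro k
      rcases eq_or_ne i k with hk | hk
      · subst hk; simp
      · simp [hk, hk.symm]
    simp only [hk]
    rw [Finset.sum_add_distrib, Finset.sum_const, Finset.sum_ite_eq]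
    simp [Finset.card_univ, nsmul_eq_mul]
    ring
  · have hk : ∀ k : Fin d, (if i = k then p else q) * (if k = i' then r else s)
        = q * s + (if i = k then p * s - q * s else 0)
            + (if k = i' then q * r - q * s else 0) := by
      intro k
      by_cases h1 : i = k <;> by_cases h2 : k = i'
      · exact absurd (h1.trans h2) h
      · subst h1; simp [h2]
      · subst h2; simp [h1, h]
      · simp [h1, h2]
    simp only [hk]
    rw [Finset.sum_add_distrib, Finset.sum_add_distrib, Finset.sum_const,
      Finset.sum_ite_eq, Finset.sum_ite_eq']
    simp [Finset.card_univ, nsmul_eq_mul, h]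
    ring

/-- The (d²)×(d²) matrix, indexed by pairs, with entry `a` when both indices
agree, `b` when only the first agrees, `c` when only the second agrees, and
`e` otherwise. -/
def Kmat {R : Type*} [CommRing R] (d : ℕ) (a b c e : R) :
    Matrix (Fin d × Fin d) (Fin d × Fin d) R :=
  Matrix.of fun p q =>
    if p.1 = q.1 then (if p.2 = q.2 then a else b)
    else (if p.2 = q.2 then c else e)

theorem Kmat_mul {R : Type*} [CommRing R] (d : ℕ) (hd : 2 ≤ d)
    (a b c e a' b' c' e' : R) :
    Kmat d a b c e * Kmat d a' b' c' e' =
      Kmat d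
        (a * a' + ((d : R) - 1) * (b * b' + c * c') + ((d : R) - 1) ^ 2 * (e * e'))
        (a * b' + a' * b + ((d : R) - 1) * (c * e' + c' * e) + ((d : R) - 2) * (b * b')
          + ((d : R) - 1) * ((d : R) - 2) * (e * e'))
        (a * c' + a' * c + ((d : R) - 1) * (b * e' + b' * e) + ((d : R) - 2) * (c * c')
          + ((d : R) - 1) * ((d : R) - 2) * (e * e'))
        (a * e' + a' * e + b * c' + b' * c
          + ((d : R) - 2) * (c * e' + c' * e + b * e' + b' * e)
          + ((d : R) - 2) ^ 2 * (e * e')) := by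
  ext ⟨i, j⟩ ⟨i', j'⟩
  rw [Matrix.mul_apply, Fintype.sum_prod_type]
  simp only [Kmat, Matrix.of_apply]
  have hswap : ∀ (k l : Fin d),
      (if i = k then (if j = l then a else b) else (if j = l then c else e)) *
        (if k = i' then (if l = j' then a' else b') else (if l = j' then c' else e'))
      = (if j = l then (if i = k then a else c) else (if i = k then b else e)) *
        (if l = j' then (if k = i' then a' else c') else (if k = i' then b' else e')) := by
    intro k l; split_ifs <;> rfl
  simp only [hswap]
  have hinner : ∀ k : Fin d,
      ∑ l : Fin d,
        (if j = l then (if i = k then a else c) else (if i = k then b else e)) *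
          (if l = j' then (if k = i' then a' else c') else (if k = i' then b' else e'))
      = if j = j' then
          (if i = k then a else c) * (if k = i' then a' else c')
            + ((d : R) - 1) * ((if i = k then b else e) * (if k = i' then b' else e'))
        else
          (if i = k then a else c) * (if k = i' then b' else e')
            + (if i = k then b else e) * (if k = i' then a' else c')
            + ((d : R) - 2) * ((if i = k then b else e) * (if k = i' then b' else e')) :=
    fun k => sum_ite_mul_ite j j' _ _ _ _
  simp only [hinner]
  by_cases hj : j = j'
  · simp only [hj, if_pos rfl, if_true, ite_true]
    rw [Finset.sum_add_distrib, ← Finset.mul_sum, sum_ite_mul_ite, sum_ite_mul_ite]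
    by_cases hi : i = i' <;> simp [hi] <;> ring
  · simp only [hj, if_neg hj, if_false, ite_false]
    rw [Finset.sum_add_distrib, Finset.sum_add_distrib, ← Finset.mul_sum,
      sum_ite_mul_ite, sum_ite_mul_ite, sum_ite_mul_ite]
    by_cases hi : i = i' <;> simp [hi, hj] <;> ring
end

section
/- For d ≥ 2, the minimal polynomial of K_d over ℚ is exactly (t−(d−1))(t−(2d−1))(t+1); in particular, d−1, 2d−1, and −1 are all eigenvalues of K_d. -/
open Polynomial

/-- The (d²)×(d²) matrix `K_d` with entry 1 at `((i,j),(i',j'))` iff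
`i = i'` or `j = j'`, and 0 otherwise. -/
def Kd (d : ℕ) : Matrix (Fin d × Fin d) (Fin d × Fin d) ℚ :=
  Matrix.of fun p q => if p.1 = q.1 ∨ p.2 = q.2 then 1 else 0

namespace KdAux

open Matrix Kronecker

def J1 (d : ℕ) : Matrix (Fin d) (Fin d) ℚ := Matrix.of fun _ _ => 1

def Pm (d : ℕ) : Matrix (Fin d × Fin d) (Fin d × Fin d) ℚ := (1 : Matrix (Fin d) (Fin d) ℚ) ⊗ₖ J1 d
def Qm (d : ℕ) : Matrix (Fin d × Fin d) (Fin d × Fin d) ℚ := J1 d ⊗ₖ (1 : Matrix (Fin d) (Fin d) ℚ)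
def Jm (d : ℕ) : Matrix (Fin d × Fin d) (Fin d × Fin d) ℚ := J1 d ⊗ₖ J1 d

lemma hJ1 (d : ℕ) : J1 d * J1 d = (d : ℚ) • J1 d := by
  ext i j
  simp [J1, Matrix.mul_apply, Finset.sum_const]

lemma hK (d : ℕ) : Kd d = Pm d + Qm d - 1 := by
  ext p q
  simp only [Kd, Pm, Qm, J1, Matrix.of_apply, Matrix.sub_apply, Matrix.add_apply,
    Matrix.one_apply, kroneckerMap_apply, Prod.ext_iff]
  rcases eq_or_ne p.1 q.1 with h1 | h1 <;> rcases eq_or_ne p.2 q.2 with h2 | h2 <;>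
    simp [h1, h2]

lemma hPP (d : ℕ) : Pm d * Pm d = (d : ℚ) • Pm d := by
  simp only [Pm, Qm, Jm, ← Matrix.mul_kronecker_mul, one_mul, mul_one, hJ1,
    Matrix.kronecker_smul, Matrix.smul_kronecker]

lemma hQQ (d : ℕ) : Qm d * Qm d = (d : ℚ) • Qm d := by
  simp only [Pm, Qm, Jm, ← Matrix.mul_kronecker_mul, one_mul, mul_one, hJ1,
    Matrix.kronecker_smul, Matrix.smul_kronecker]

lemma hPQ (d : ℕ) : Pm d * Qm d = Jm d := by
  simp only [Pm, Qm, Jm, ← Matrix.mul_kronecker_mul, one_mul, mul_one, hJ1,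
    Matrix.kronecker_smul, Matrix.smul_kronecker]

lemma hQP (d : ℕ) : Qm d * Pm d = Jm d := by
  simp only [Pm, Qm, Jm, ← Matrix.mul_kronecker_mul, one_mul, mul_one, hJ1,
    Matrix.kronecker_smul, Matrix.smul_kronecker]

lemma hPJ (d : ℕ) : Pm d * Jm d = (d : ℚ) • Jm d := by
  simp only [Pm, Qm, Jm, ← Matrix.mul_kronecker_mul, one_mul, mul_one, hJ1,
    Matrix.kronecker_smul, Matrix.smul_kronecker]

lemma hJP (d : ℕ) : Jm d * Pm d = (d : ℚ) • Jm d := by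
  simp only [Pm, Qm, Jm, ← Matrix.mul_kronecker_mul, one_mul, mul_one, hJ1,
    Matrix.kronecker_smul, Matrix.smul_kronecker]

lemma hQJ (d : ℕ) : Qm d * Jm d = (d : ℚ) • Jm d := by
  simp only [Pm, Qm, Jm, ← Matrix.mul_kronecker_mul, one_mul, mul_one, hJ1,
    Matrix.kronecker_smul, Matrix.smul_kronecker]

lemma hJQ (d : ℕ) : Jm d * Qm d = (d : ℚ) • Jm d := by
  simp only [Pm, Qm, Jm, ← Matrix.mul_kronecker_mul, one_mul, mul_one, hJ1,
    Matrix.kronecker_smul, Matrix.smul_kronecker]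

lemma key (d : ℕ) :
    (Kd d - ((d : ℚ) - 1) • 1) * ((Kd d - (2 * (d : ℚ) - 1) • 1) * (Kd d + 1)) = 0 := by
  rw [hK]
  simp only [sub_mul, mul_sub, add_mul, mul_add, smul_mul_assoc, mul_smul_comm, one_mul,
    mul_one, hPP, hPQ, hQP, hQQ, hPJ, hQJ, hJP, hJQ, smul_smul, smul_sub, smul_add]
  module

lemma mulVec_Pm (d : ℕ) (v : Fin d × Fin d → ℚ) (p : Fin d × Fin d) :
    (Pm d).mulVec v p = ∑ j, v (p.1, j) := by
  simp only [Pm, J1, Matrix.mulVec, dotProduct, Fintype.sum_prod_type,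
    Matrix.kroneckerMap_apply, Matrix.of_apply, Matrix.one_apply, ite_mul, one_mul,
    zero_mul, mul_one]
  rw [Finset.sum_comm]
  simp [Finset.sum_ite_eq]

lemma mulVec_Qm (d : ℕ) (v : Fin d × Fin d → ℚ) (p : Fin d × Fin d) :
    (Qm d).mulVec v p = ∑ i, v (i, p.2) := by
  simp [Qm, J1, Matrix.mulVec, dotProduct, Fintype.sum_prod_type,
    Matrix.one_apply, ite_mul, Finset.sum_ite_eq]

end KdAux

theorem Kd_minpoly (d : ℕ) (hd : 2 ≤ d) :
    minpoly ℚ (Kd d) =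
      (X - C ((d : ℚ) - 1)) * (X - C (2 * (d : ℚ) - 1)) * (X + C 1) ∧
    Module.End.HasEigenvalue (Matrix.mulVecLin (Kd d)) ((d : ℚ) - 1) ∧
    Module.End.HasEigenvalue (Matrix.mulVecLin (Kd d)) (2 * (d : ℚ) - 1) ∧
    Module.End.HasEigenvalue (Matrix.mulVecLin (Kd d)) (-1) := by
  have hd2 : (2 : ℚ) ≤ (d : ℚ) := by exact_mod_cast hd
  -- the two distinguished indices
  have h0d : 0 < d := by omega
  have h1d : 1 < d := by omega
  set i0 : Fin d := ⟨0, h0d⟩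
  set i1 : Fin d := ⟨1, h1d⟩
  have hi01 : i0 ≠ i1 := by simp [i0, i1, Fin.ext_iff]
  set f : Fin d → ℚ := fun j => (if j = i0 then (1 : ℚ) else 0) + (if j = i1 then -1 else 0)
    with hf
  have hsumf : ∑ j, f j = 0 := by
    simp [hf, Finset.sum_add_distrib, Finset.sum_ite_eq']
  have hfi0 : f i0 = 1 := by simp [hf, hi01]
  -- eigenvectors
  have hK := KdAux.hK d
  have heigb : Module.End.HasEigenvalue (Matrix.mulVecLin (Kd d)) (2 * (d : ℚ) - 1) := by
    refine Module.End.hasEigenvalue_of_hasEigenvector (x := fun _ => (1 : ℚ))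
      ⟨Module.End.mem_eigenspace_iff.2 ?_, ?_⟩
    · funext p
      rw [Matrix.mulVecLin_apply, hK]
      simp only [Matrix.sub_mulVec, Matrix.add_mulVec, Matrix.one_mulVec]
      rw [Pi.sub_apply, Pi.add_apply, KdAux.mulVec_Pm, KdAux.mulVec_Qm]
      simp
      ring
    · intro h
      have := congrFun h (i0, i0)
      simp at this
  have heiga : Module.End.HasEigenvalue (Matrix.mulVecLin (Kd d)) ((d : ℚ) - 1) := by
    refine Module.End.hasEigenvalue_of_hasEigenvector (x := fun p => f p.2)
      ⟨Module.End.mem_eigenspace_iff.2 ?_, ?_⟩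
    · funext p
      rw [Matrix.mulVecLin_apply, hK]
      simp only [Matrix.sub_mulVec, Matrix.add_mulVec, Matrix.one_mulVec]
      rw [Pi.sub_apply, Pi.add_apply, KdAux.mulVec_Pm, KdAux.mulVec_Qm]
      simp [hsumf, Finset.sum_const]
      ring
    · intro h
      have := congrFun h (i0, i0)
      simp only [Pi.zero_apply] at this
      rw [hfi0] at this
      norm_num at this
  have heigc : Module.End.HasEigenvalue (Matrix.mulVecLin (Kd d)) (-1 : ℚ) := by
    refine Module.End.hasEigenvalue_of_hasEigenvector (x := fun p => f p.1 * f p.2)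
      ⟨Module.End.mem_eigenspace_iff.2 ?_, ?_⟩
    · funext p
      rw [Matrix.mulVecLin_apply, hK]
      simp only [Matrix.sub_mulVec, Matrix.add_mulVec, Matrix.one_mulVec]
      rw [Pi.sub_apply, Pi.add_apply, KdAux.mulVec_Pm, KdAux.mulVec_Qm]
      simp only [← Finset.mul_sum, ← Finset.sum_mul, hsumf]
      simp
    · intro h
      have := congrFun h (i0, i0)
      simp only [Pi.zero_apply] at this
      rw [hfi0] at this
      norm_num at this
  -- the minimal polynomial
  set m : ℚ[X] := (X - C ((d : ℚ) - 1)) * (X - C (2 * (d : ℚ) - 1)) * (X + C 1) with hm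
  have hint : IsIntegral ℚ (Kd d) := IsIntegral.of_finite ℚ _
  have e1 : aeval (Kd d) (X - C ((d : ℚ) - 1)) = Kd d - ((d : ℚ) - 1) • 1 := by
    rw [map_sub, aeval_X, aeval_C, Algebra.algebraMap_eq_smul_one]
  have e2 : aeval (Kd d) (X - C (2 * (d : ℚ) - 1)) = Kd d - (2 * (d : ℚ) - 1) • 1 := by
    rw [map_sub, aeval_X, aeval_C, Algebra.algebraMap_eq_smul_one]
  have e3 : aeval (Kd d) (X + C (1 : ℚ)) = Kd d + 1 := by
    rw [map_add, aeval_X, aeval_C, map_one]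
  have haev : aeval (Kd d) m = 0 := by
    rw [hm, map_mul, map_mul, e1, e2, e3, mul_assoc]
    exact KdAux.key d
  have hdvd1 : minpoly ℚ (Kd d) ∣ m := minpoly.dvd ℚ _ haev
  -- minpoly of the matrix equals the minpoly of the associated endomorphism
  have hiso : minpoly ℚ (Matrix.mulVecLin (Kd d)) = minpoly ℚ (Kd d) := by
    have : Matrix.mulVecLin (Kd d) = Matrix.toLinAlgEquiv' (Kd d) := by
      apply LinearMap.ext
      intro v
      rw [Matrix.toLinAlgEquiv'_apply, Matrix.mulVecLin_apply]
    rw [this, minpoly.algEquiv_eq]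
  have hroot : ∀ μ : ℚ, Module.End.HasEigenvalue (Matrix.mulVecLin (Kd d)) μ →
      (X - C μ) ∣ minpoly ℚ (Kd d) := by
    intro μ hμ
    rw [← hiso]
    exact dvd_iff_isRoot.2 (Module.End.hasEigenvalue_iff_isRoot.1 hμ)
  have hne1 : ((d : ℚ) - 1) ≠ (2 * (d : ℚ) - 1) := by intro h; nlinarith
  have hne2 : ((d : ℚ) - 1) ≠ -1 := by intro h; nlinarith
  have hne3 : (2 * (d : ℚ) - 1) ≠ -1 := by intro h; nlinarith
  have hXC : (X + C (1 : ℚ)) = X - C (-1) := by rw [map_neg, sub_neg_eq_add]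
  have hdvd2 : m ∣ minpoly ℚ (Kd d) := by
    rw [hm, hXC]
    refine IsCoprime.mul_dvd ?_ ?_ (hroot _ heigc)
    · exact IsCoprime.mul_left
        (isCoprime_X_sub_C_of_isUnit_sub (sub_ne_zero.2 hne2).isUnit)
        (isCoprime_X_sub_C_of_isUnit_sub (sub_ne_zero.2 hne3).isUnit)
    · exact IsCoprime.mul_dvd
        (isCoprime_X_sub_C_of_isUnit_sub (sub_ne_zero.2 hne1).isUnit)
        (hroot _ heiga) (hroot _ heigb)
  have hmmonic : m.Monic := ((monic_X_sub_C _).mul (monic_X_sub_C _)).mul (monic_X_add_C _)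
  exact ⟨Polynomial.eq_of_monic_of_associated (minpoly.monic hint) hmmonic
      (associated_of_dvd_dvd hdvd1 hdvd2), heiga, heigb, heigc⟩
end

section
/- For d ≥ 2, the eigenspace of K_d for the eigenvalue −1 has dimension (d−1)². -/
lemma Kd_mulVec (d : ℕ) (x : Fin d × Fin d → ℚ) (p : Fin d × Fin d) :
    (Kd d).mulVec x p =
      (∑ j, x (p.1, j)) + (∑ i, x (i, p.2)) - x p := by
  have h : ∀ q : Fin d × Fin d,
      Kd d p q * x q =
        (if p.1 = q.1 then x q else 0) + (if p.2 = q.2 then x q else 0)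
          - (if (p.1, p.2) = q then x q else 0) := by
    intro q
    simp only [Kd, Matrix.of_apply, Prod.mk.injEq, Prod.ext_iff]
    by_cases h1 : p.1 = q.1 <;> by_cases h2 : p.2 = q.2 <;> simp [h1, h2]
  simp only [Matrix.mulVec, dotProduct, h]
  rw [Finset.sum_sub_distrib, Finset.sum_add_distrib]
  congr 1
  · congr 1
    · rw [Fintype.sum_prod_type]
      have h1 : ∀ a : Fin d, (∑ b : Fin d, if p.1 = a then x (a, b) else 0)
          = if p.1 = a then ∑ b : Fin d, x (a, b) else 0 := by
        intro a; split <;> simp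
      simp_rw [h1]
      rw [Finset.sum_ite_eq]
      simp
    · rw [Fintype.sum_prod_type_right]
      have h2 : ∀ a : Fin d, (∑ b : Fin d, if p.2 = a then x (b, a) else 0)
          = if p.2 = a then ∑ b : Fin d, x (b, a) else 0 := by
        intro a; split <;> simp
      simp_rw [h2]
      rw [Finset.sum_ite_eq]
      simp
  · rw [Finset.sum_ite_eq]
    simp

def Lmap (e : ℕ) : (Fin (e+1) × Fin (e+1) → ℚ) →ₗ[ℚ] (Fin (e+1) → ℚ) × (Fin e → ℚ) where
  toFun x := (fun i => ∑ j, x (i, j), fun j => ∑ i, x (i, j.castSucc))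
  map_add' := by intros; ext <;> simp [Finset.sum_add_distrib]
  map_smul' := by intros; ext <;> simp [Finset.mul_sum]

lemma Lmap_surj (e : ℕ) : Function.Surjective (Lmap e) := by
  rintro ⟨R, C⟩
  classical
  refine ⟨fun p => if p.1 = 0 then
      (if h : (p.2 : ℕ) < e then C ⟨p.2, h⟩ else R 0 - ∑ j, C j)
    else (if (p.2 : ℕ) < e then 0 else R p.1), ?_⟩
  ext i
  · -- row sums
    simp only [Lmap, LinearMap.coe_mk, AddHom.coe_mk]
    by_cases hi : i = 0
    · subst hi
      rw [Fin.sum_univ_castSucc]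
      simp [Fin.is_lt, Fin.castSucc]
    · rw [Fin.sum_univ_castSucc]
      simp [hi, Fin.is_lt, Fin.castSucc]
  · -- column sums
    simp only [Lmap, LinearMap.coe_mk, AddHom.coe_mk]
    rw [Fin.sum_univ_succ]
    simp [Fin.is_lt, Fin.castSucc, Fin.succ_ne_zero]

lemma rowcol (e : ℕ) (x : Fin (e+1) × Fin (e+1) → ℚ)
    (h : ∀ i j : Fin (e+1), (∑ b, x (i, b)) + (∑ a, x (a, j)) = 0) :
    (∀ i, (∑ b, x (i, b)) = 0) ∧ (∀ j, (∑ a, x (a, j)) = 0) := by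
  set R : Fin (e+1) → ℚ := fun i => ∑ b, x (i, b) with hR
  set C : Fin (e+1) → ℚ := fun j => ∑ a, x (a, j) with hC
  have hT : ∑ i, R i = ∑ j, C j := by
    rw [hR, hC]
    rw [Finset.sum_comm]
  have hRc : ∀ i, R i = -C 0 := fun i => by linarith [h i 0]
  have hCc : ∀ j, C j = -R 0 := fun j => by linarith [h 0 j]
  have h1 : ∑ i, R i = (e+1 : ℚ) * (-C 0) := by
    rw [Finset.sum_congr rfl fun i _ => hRc i]; simp
  have h2 : ∑ j, C j = (e+1 : ℚ) * (-R 0) := by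
    rw [Finset.sum_congr rfl fun j _ => hCc j]; simp
  have h0 : R 0 = -C 0 := hRc 0
  have he : (0:ℚ) < (e+1 : ℚ) := by positivity
  have hR0 : R 0 = 0 := by nlinarith
  have hC0 : C 0 = 0 := by nlinarith
  exact ⟨fun i => by have := hRc i; rw [hC0, neg_zero] at this; exact this,
    fun j => by have := hCc j; rw [hR0, neg_zero] at this; exact this⟩

lemma eigen_eq_ker (e : ℕ) :
    Module.End.eigenspace (Matrix.mulVecLin (Kd (e+1))) (-1) = LinearMap.ker (Lmap e) := by
  ext x
  rw [Module.End.mem_eigenspace_iff, LinearMap.mem_ker]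
  have hmv : (Matrix.mulVecLin (Kd (e+1))) x = (-1 : ℚ) • x ↔
      ∀ i j : Fin (e+1), (∑ b, x (i, b)) + (∑ a, x (a, j)) = 0 := by
    rw [funext_iff]
    constructor
    · intro h i j
      have := h (i, j)
      rw [Matrix.mulVecLin_apply] at this
      rw [Kd_mulVec] at this
      simp only [Pi.smul_apply, smul_eq_mul, neg_one_mul] at this
      linarith
    · intro h p
      rw [Matrix.mulVecLin_apply, Kd_mulVec]
      have := h p.1 p.2
      simp only [Pi.smul_apply, smul_eq_mul, neg_one_mul]
      linarith
  rw [hmv]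
  constructor
  · intro h
    obtain ⟨hR, hC⟩ := rowcol e x h
    have : Lmap e x = (fun i => ∑ b, x (i, b), fun j : Fin e => ∑ a, x (a, j.castSucc)) := rfl
    rw [this]
    ext i
    · exact hR i
    · exact hC _
  · intro h i j
    have hR : ∀ i, (∑ b, x (i, b)) = 0 := fun i => congrFun (congrArg Prod.fst h) i
    have hC' : ∀ j : Fin e, (∑ a, x (a, j.castSucc)) = 0 :=
      fun j => congrFun (congrArg Prod.snd h) j
    have hT : ∑ j', ∑ a, x (a, j') = 0 := by
      rw [Finset.sum_comm]
      simp [hR]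
    have hlast : (∑ a, x (a, Fin.last e)) = 0 := by
      rw [Fin.sum_univ_castSucc] at hT
      simpa [hC'] using hT
    have hC : ∀ j, (∑ a, x (a, j)) = 0 := by
      intro j
      rcases Fin.eq_castSucc_or_eq_last j with ⟨j', rfl⟩ | rfl
      · exact hC' j'
      · exact hlast
    rw [hR i, hC j, add_zero]


theorem Kd_eigenspace_negOne (d : ℕ) (hd : 2 ≤ d) :
    Module.finrank ℚ
      (Module.End.eigenspace (Matrix.mulVecLin (Kd d)) (-1)) = (d - 1) ^ 2 := by
  obtain ⟨e, rfl⟩ : ∃ e, d = e + 1 := ⟨d - 1, by omega⟩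
  rw [eigen_eq_ker]
  have hrn := LinearMap.finrank_range_add_finrank_ker (Lmap e)
  have hrange : LinearMap.range (Lmap e) = ⊤ :=
    LinearMap.range_eq_top.mpr (Lmap_surj e)
  rw [hrange] at hrn
  have hdom : Module.finrank ℚ (Fin (e+1) × Fin (e+1) → ℚ) = (e+1) * (e+1) := by
    rw [Module.finrank_fintype_fun_eq_card]
    simp
  have hcod : Module.finrank ℚ (⊤ : Submodule ℚ ((Fin (e+1) → ℚ) × (Fin e → ℚ)))
      = (e+1) + e := by
    rw [finrank_top]
    rw [Module.finrank_prod]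
    simp
  rw [hdom, hcod] at hrn
  have hsq : (e+1) * (e+1) = e^2 + (2*e+1) := by ring
  have : (e + 1 - 1) ^ 2 = e ^ 2 := by simp
  omega
end

section
/- Let d ≥ 2 and index a set of d² 'lines' by pairs (p,q) ∈ {1,…,d}², with intersection pairing L_{p,q}·L_{p',q'} equal to −d+2 if (p,q)=(p',q'), equal to 1 if exactly one of p=p' or q=q' holds (i.e. p=p' or q=q' but not both), and 0 otherwise. Then the rank of the resulting (d²)×(d²) intersection matrix is (d−1)² + 1. -/
open Matrix Kronecker

/-- The intersection matrix of the d² lines `L_{p,q}`: self-intersection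
`−d+2`, intersection number 1 if exactly one of `p = p'`, `q = q'` holds,
and 0 otherwise. -/
def interMat (d : ℕ) : Matrix (Fin d × Fin d) (Fin d × Fin d) ℚ :=
  Matrix.of fun p q =>
    if p = q then -(d : ℚ) + 2
    else if (p.1 = q.1 ∧ p.2 ≠ q.2) ∨ (p.1 ≠ q.1 ∧ p.2 = q.2) then 1 else 0

/-- All-ones matrix. -/
private def Jm (d : ℕ) : Matrix (Fin d) (Fin d) ℚ := Matrix.of fun _ _ => 1

/-- Change of basis: columns are `𝟙` and `e_k − e_0`. -/
private def Qm (d : ℕ) [NeZero d] : Matrix (Fin d) (Fin d) ℚ :=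
  Matrix.of fun i k =>
    (if i = k then 1 else 0) + (if k = 0 then 1 else 0) - (if i = 0 then 1 else 0)

private def Rm (d : ℕ) [NeZero d] : Matrix (Fin d) (Fin d) ℚ :=
  Matrix.of fun k j =>
    ((if k = j then 1 else 0) - (if k = 0 then 1 else 0) * (if j = 0 then 1 else 0))
      + ((if k = 0 then 2/(d:ℚ) else 0) - 1/(d:ℚ))

private lemma Qm_mul_Rm (d : ℕ) [NeZero d] : Qm d * Rm d = 1 := by
  have hd : (d:ℚ) ≠ 0 := Nat.cast_ne_zero.mpr (NeZero.ne d)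
  ext i j
  rw [Matrix.mul_apply]
  simp only [Qm, Rm, Matrix.of_apply, Matrix.one_apply]
  simp only [add_mul, sub_mul, mul_add, mul_sub, ite_mul, mul_ite, one_mul, mul_one, zero_mul,
    mul_zero, Finset.sum_add_distrib, Finset.sum_sub_distrib, Finset.sum_ite_eq,
    Finset.sum_ite_eq', Finset.mem_univ, if_true, Finset.sum_const, Finset.card_univ,
    Fintype.card_fin, nsmul_eq_mul]
  by_cases hi : i = 0 <;> by_cases hj : j = 0 <;> by_cases hij : i = j <;>
    simp_all <;> field_simp <;> ring

private def w1 (d : ℕ) [NeZero d] : Fin d → ℚ := fun i => if i = 0 then (d:ℚ) else 0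

private lemma Jm_mul_Qm (d : ℕ) [NeZero d] : Jm d * Qm d = Qm d * Matrix.diagonal (w1 d) := by
  ext i j
  rw [Matrix.mul_apply, Matrix.mul_apply]
  simp only [Jm, Qm, w1, Matrix.of_apply, Matrix.diagonal_apply, one_mul, mul_ite, mul_zero,
    Finset.sum_add_distrib, Finset.sum_sub_distrib, Finset.sum_ite_eq, Finset.sum_ite_eq',
    Finset.mem_univ, if_true, Finset.sum_const, Finset.card_univ, Fintype.card_fin,
    nsmul_eq_mul, Finset.sum_ite_eq]
  by_cases hj : j = 0 <;> by_cases hij : i = j <;> simp_all [Finset.sum_ite_eq'] <;> ring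

private lemma interMat_eq (d : ℕ) :
    interMat d = 1 ⊗ₖ Jm d + Jm d ⊗ₖ 1 - (d:ℚ) • 1 := by
  ext p q
  simp only [interMat, Matrix.of_apply, Matrix.add_apply, Matrix.sub_apply, Matrix.smul_apply,
    Matrix.kroneckerMap_apply, Matrix.one_apply, smul_eq_mul, Jm, Prod.ext_iff]
  by_cases h1 : p.1 = q.1 <;> by_cases h2 : p.2 = q.2 <;> simp_all <;> ring

private def w2 (d : ℕ) [NeZero d] : Fin d × Fin d → ℚ :=
  fun p => w1 d p.1 * 1 + 1 * w1 d p.2 - (d:ℚ)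

private lemma key (d : ℕ) [NeZero d] :
    interMat d * (Qm d ⊗ₖ Qm d) = (Qm d ⊗ₖ Qm d) * Matrix.diagonal (w2 d) := by
  have h1 : (1 : Matrix (Fin d) (Fin d) ℚ) = Matrix.diagonal fun _ => 1 := by
    simp [Matrix.diagonal_one]
  rw [interMat_eq, sub_mul, add_mul, smul_mul_assoc,
    ← Matrix.mul_kronecker_mul, ← Matrix.mul_kronecker_mul]
  simp only [one_mul]
  rw [Jm_mul_Qm]
  have e1 : Qm d ⊗ₖ (Qm d * Matrix.diagonal (w1 d))
      = (Qm d ⊗ₖ Qm d) * ((Matrix.diagonal fun _ => 1) ⊗ₖ Matrix.diagonal (w1 d)) := by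
    rw [← Matrix.mul_kronecker_mul, ← h1, mul_one]
  have e2 : (Qm d * Matrix.diagonal (w1 d)) ⊗ₖ Qm d
      = (Qm d ⊗ₖ Qm d) * (Matrix.diagonal (w1 d) ⊗ₖ (Matrix.diagonal fun _ => 1)) := by
    rw [← Matrix.mul_kronecker_mul, ← h1, mul_one]
  rw [e1, e2, ← mul_add]
  have e3 : (d:ℚ) • (Qm d ⊗ₖ Qm d) = (Qm d ⊗ₖ Qm d) * ((d:ℚ) • 1) := by
    rw [mul_smul_comm, mul_one]
  rw [e3, ← mul_sub]
  congr 1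
  ext p q
  simp only [Matrix.diagonal_kronecker_diagonal, Matrix.sub_apply, Matrix.add_apply,
    Matrix.smul_apply, Matrix.diagonal_apply, Matrix.one_apply, w2, smul_eq_mul]
  split <;> simp <;> ring

private lemma rank_eq (d : ℕ) [NeZero d] :
    (interMat d).rank = (Matrix.diagonal (w2 d)).rank := by
  have hQR : Qm d * Rm d = 1 := Qm_mul_Rm d
  have hP : (Qm d ⊗ₖ Qm d) * (Rm d ⊗ₖ Rm d) = 1 := by
    rw [← Matrix.mul_kronecker_mul, hQR, Matrix.one_kronecker_one]
  have hdet : IsUnit (Qm d ⊗ₖ Qm d).det := Matrix.isUnit_det_of_right_inverse hP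
  calc (interMat d).rank = (interMat d * (Qm d ⊗ₖ Qm d)).rank :=
        (Matrix.rank_mul_eq_left_of_isUnit_det _ _ hdet).symm
    _ = ((Qm d ⊗ₖ Qm d) * Matrix.diagonal (w2 d)).rank := by rw [key]
    _ = (Matrix.diagonal (w2 d)).rank := Matrix.rank_mul_eq_right_of_isUnit_det _ _ hdet

theorem interMat_rank (d : ℕ) (hd : 2 ≤ d) :
    (interMat d).rank = (d - 1) ^ 2 + 1 := by
  have : NeZero d := ⟨by omega⟩
  have hd0 : (d:ℚ) ≠ 0 := Nat.cast_ne_zero.mpr (NeZero.ne d)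
  rw [rank_eq, Matrix.rank_diagonal]
  have hiff : ∀ p : Fin d × Fin d, w2 d p ≠ 0 ↔ ((p.1 = 0 ∧ p.2 = 0) ∨ (p.1 ≠ 0 ∧ p.2 ≠ 0)) := by
    intro p
    simp only [w2, w1, mul_one, one_mul]
    by_cases h1 : p.1 = 0 <;> by_cases h2 : p.2 = 0 <;> simp [h1, h2, hd0, sub_eq_zero]
  rw [Fintype.card_subtype]
  have : (Finset.univ.filter fun p : Fin d × Fin d => w2 d p ≠ 0)
      = ((Finset.univ.filter (· = (0:Fin d))) ×ˢ (Finset.univ.filter (· = (0:Fin d))))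
        ∪ ((Finset.univ.filter (· ≠ (0:Fin d))) ×ˢ (Finset.univ.filter (· ≠ (0:Fin d)))) := by
    ext p
    simp [hiff p]
  rw [this, Finset.card_union_of_disjoint, Finset.card_product, Finset.card_product,
    Finset.filter_eq', Finset.filter_ne']
  · simp only [Finset.mem_univ, if_true, Finset.card_singleton,
      Finset.card_erase_of_mem, Finset.card_univ, Fintype.card_fin]
    rw [pow_two]
    omega
  · rw [Finset.disjoint_left]
    rintro ⟨a, b⟩ h1 h2
    simp_all
end

section
/- Let λ ∈ ℂ \ {0,1}, φ(x,y) = yx(y−x)(y−λx), and p ∈ ℂ with p⁴ = 1/(λ−1)². Then the line defined by x = pz − pt, y = λpz − pt is contained in the surface φ(x,y) = φ(z,t) in ℙ³. -/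
/-- The line `x = p z − p t`, `y = λ p z − p t` (with `p⁴ = 1/(λ−1)²`) lies on
the quartic surface `φ(x,y) = φ(z,t)` where `φ(x,y) = y x (y−x)(y−λx)`. -/
theorem line_s1_on_surface (l p : ℂ) (h0 : l ≠ 0) (h1 : l ≠ 1)
    (hp : p ^ 4 = 1 / (l - 1) ^ 2) (z t : ℂ) :
    (l * p * z - p * t) * (p * z - p * t)
        * ((l * p * z - p * t) - (p * z - p * t))
        * ((l * p * z - p * t) - l * (p * z - p * t)) =
      t * z * (t - z) * (t - l * z) := by
  have hl : l - 1 ≠ 0 := sub_ne_zero.mpr h1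
  have key : p ^ 4 * (l - 1) ^ 2 = 1 := by
    rw [hp]; field_simp
  linear_combination ((l * z - t) * (z - t) * z * t) * key
end

section
/- Let λ ∈ ℂ \ {0,1}, φ(x,y) = yx(y−x)(y−λx), and p ∈ ℂ with p⁴ = 1/λ². Then the line defined by x = pt, y = λpz is contained in the surface φ(x,y) = φ(z,t) in ℙ³. -/
/-- The line `x = p t`, `y = λ p z` (with `p⁴ = 1/λ²`) lies on the quartic
surface `φ(x,y) = φ(z,t)` where `φ(x,y) = y x (y−x)(y−λx)`. -/
theorem line_s2_on_surface (l p : ℂ) (h0 : l ≠ 0) (h1 : l ≠ 1)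
    (hp : p ^ 4 = 1 / l ^ 2) (z t : ℂ) :
    (l * p * z) * (p * t) * ((l * p * z) - (p * t))
        * ((l * p * z) - l * (p * t)) =
      t * z * (t - z) * (t - l * z) := by
  have key : l ^ 2 * p ^ 4 = 1 := by
    rw [hp]; field_simp
  linear_combination (z * t * (l * z - t) * (z - t)) * key
end
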